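/- For the Rician Shadowed distribution with parameters m > 0, Rician factor K_r ≥ 0, and mean γ̄ > 0, the generalized MGF of integer order n satisfies, for s ≤ 0: M^{(n)}(s) = (m/(m+K_r))^m · (1+K_r) Γ(n+1) γ̄^n / (1+K_r - γ̄ s)^{n+1} · ₂F₁(m, n+1; 1; (1+K_r)K_r / ((m+K_r)(1+K_r - γ̄ s))). -/

import Mathlib

open Real MeasureTheory Set Filter Topology

noncomputable def poch (a : ℝ) (n : ℕ) : ℝ := (ascPochhammer ℝ n).eval a

/-- Confluent hypergeometric function of the first kind (series). -/
noncomputable def hyp1F1 (a c z : ℝ) : ℝ :=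
  ∑' k : ℕ, poch a k / (poch c k * (k.factorial : ℝ)) * z ^ k

/-- Gauss hypergeometric series. -/
noncomputable def hyp2F1 (a b c z : ℝ) : ℝ :=
  ∑' k : ℕ, poch a k * poch b k / (poch c k * (k.factorial : ℝ)) * z ^ k

lemma poch_zero (a : ℝ) : poch a 0 = 1 := by simp [poch]

lemma poch_succ (a : ℝ) (k : ℕ) : poch a (k+1) = poch a k * (a + k) := by
  simp [poch, ascPochhammer_succ_right]

lemma poch_pos {a : ℝ} (ha : 0 < a) (k : ℕ) : 0 < poch a k := by
  induction k with
  | zero => simp [poch_zero]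
  | succ k ih => rw [poch_succ]; positivity

lemma poch_one (k : ℕ) : poch 1 k = k.factorial := by
  induction k with
  | zero => simp [poch_zero]
  | succ k ih => rw [poch_succ, ih, Nat.factorial_succ]; push_cast; ring

lemma factorial_poch (n k : ℕ) :
    ((n + k).factorial : ℝ) = n.factorial * poch ((n : ℝ) + 1) k := by
  induction k with
  | zero => simp [poch_zero]
  | succ k ih =>
    rw [show n + (k+1) = (n+k)+1 from rfl, Nat.factorial_succ, poch_succ]
    push_cast [ih]; ring

lemma integrable_pow_exp (p : ℕ) {l : ℝ} (hl : 0 < l) :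
    IntegrableOn (fun x : ℝ => x ^ p * Real.exp (-(l * x))) (Ioi 0) := by
  have h := integrableOn_rpow_mul_exp_neg_mul_rpow (p := 1) (s := (p : ℝ)) (b := l)
    (by exact_mod_cast neg_one_lt_zero.trans_le (Nat.cast_nonneg p) : (-1:ℝ) < (p:ℝ)) one_pos hl
  refine h.congr_fun (fun x hx => ?_) measurableSet_Ioi
  simp [Real.rpow_natCast, Real.rpow_one]

lemma integral_pow_exp (p : ℕ) {l : ℝ} (hl : 0 < l) :
    ∫ x in Ioi (0:ℝ), x ^ p * Real.exp (-(l * x)) = p.factorial / l ^ (p+1) := by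
  have h := integral_rpow_mul_exp_neg_mul_Ioi (a := (p : ℝ) + 1) (r := l) (by positivity) hl
  rw [show ((p:ℝ) + 1) - 1 = (p:ℝ) by ring] at h
  have : ∫ x in Ioi (0:ℝ), x ^ p * Real.exp (-(l * x))
      = ∫ t in Ioi (0:ℝ), t ^ ((p:ℝ)) * Real.exp (-(l * t)) := by
    refine setIntegral_congr_fun measurableSet_Ioi (fun x hx => ?_)
    rw [Real.rpow_natCast]
  rw [this, h]
  rw [show ((p:ℝ)+1) = ((p:ℝ) + 1) from rfl, Real.Gamma_nat_eq_factorial,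
    show ((p:ℝ)+1) = ((p+1 : ℕ) : ℝ) by push_cast; ring, Real.rpow_natCast]
  field_simp
  rw [← mul_pow, one_div, inv_mul_cancel₀ hl.ne', one_pow]

lemma tendsto_aux (c : ℝ) :
    Tendsto (fun k : ℕ => (c + k) / ((k:ℝ) + 1)) atTop (𝓝 1) := by
  have h0 : Tendsto (fun k : ℕ => 1 / ((k:ℝ) + 1)) atTop (𝓝 0) :=
    tendsto_one_div_add_atTop_nhds_zero_nat
  have h := (h0.const_mul (c - 1)).add (tendsto_const_nhds (x := (1:ℝ)))
  rw [mul_zero, zero_add] at h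
  refine h.congr (fun k => ?_)
  have hk : ((k:ℝ) + 1) ≠ 0 := by positivity
  field_simp
  ring

lemma summable_main {a b z : ℝ} (ha : 0 < a) (hb : 0 < b) (hz0 : 0 ≤ z) (hz1 : z < 1) :
    Summable (fun k : ℕ => poch a k * poch b k / (poch 1 k * (k.factorial : ℝ)) * z ^ k) := by
  rcases eq_or_lt_of_le hz0 with h0 | hpos
  · refine summable_of_ne_finset_zero (s := {0}) (fun k hk => ?_)
    have : k ≠ 0 := by simpa using hk
    simp [← h0, zero_pow this]
  · set f : ℕ → ℝ := fun k => poch a k * poch b k / (poch 1 k * (k.factorial : ℝ)) * z ^ k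
    have hfpos : ∀ k, 0 < f k := fun k => by
      have h1 := poch_pos ha k; have h2 := poch_pos hb k
      have h3 := poch_pos one_pos k
      have h4 : (0:ℝ) < k.factorial := by exact_mod_cast k.factorial_pos
      positivity
    apply summable_of_ratio_test_tendsto_lt_one hz1
      (Filter.Eventually.of_forall (fun k => (hfpos k).ne'))
    have hratio : ∀ k : ℕ, ‖f (k+1)‖ / ‖f k‖
        = z * ((a + k) / ((k:ℝ) + 1)) * ((b + k) / ((k:ℝ) + 1)) := by
      intro k
      have h1 := poch_pos ha k; have h2 := poch_pos hb k
      have h3 := poch_pos one_pos k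
      have h4 : (0:ℝ) < k.factorial := by exact_mod_cast k.factorial_pos
      rw [Real.norm_of_nonneg (hfpos _).le, Real.norm_of_nonneg (hfpos _).le]
      show (poch a (k+1) * poch b (k+1) / (poch 1 (k+1) * ((k+1).factorial : ℝ)) * z ^ (k+1))
          / f k = _
      rw [poch_succ, poch_succ, poch_succ, Nat.factorial_succ]
      have hak : 0 < a + k := by positivity
      have hbk : 0 < b + k := by positivity
      have hk1 : (0:ℝ) < (k:ℝ) + 1 := by positivity
      show _ / (poch a k * poch b k / (poch 1 k * (k.factorial : ℝ)) * z ^ k) = _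
      push_cast
      field_simp
      ring
    have hT : Tendsto (fun k : ℕ => z * ((a + k) / ((k:ℝ) + 1)) * ((b + k) / ((k:ℝ) + 1)))
        atTop (𝓝 z) := by
      have := ((tendsto_const_nhds (x := z)).mul (tendsto_aux a)).mul (tendsto_aux b)
      simpa using this
    exact (tendsto_congr hratio).mpr hT

lemma key (n : ℕ) {m l c : ℝ} (hm : 0 < m) (hl : 0 < l) (hc : 0 ≤ c) (hz : c / l < 1) :
    ∫ x in Ioi (0:ℝ), x ^ n * Real.exp (-(l * x)) * hyp1F1 m 1 (c * x)
      = ((n.factorial : ℝ) / l ^ (n+1)) * hyp2F1 m ((n:ℝ)+1) 1 (c / l) := by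
  set g : ℕ → ℝ → ℝ := fun k x =>
    (poch m k / (poch 1 k * (k.factorial : ℝ)) * c ^ k) * (x ^ (n+k) * Real.exp (-(l * x)))
    with hg
  have hint : ∀ k, Integrable (g k) (volume.restrict (Ioi 0)) := fun k =>
    (integrable_pow_exp (n+k) hl).const_mul _
  have hval : ∀ k, ∫ x in Ioi (0:ℝ), g k x
      = ((n.factorial : ℝ) / l ^ (n+1)) *
        (poch m k * poch ((n:ℝ)+1) k / (poch 1 k * (k.factorial : ℝ)) * (c / l) ^ k) := by
    intro k
    rw [hg]
    simp only []
    rw [integral_const_mul, integral_pow_exp (n+k) hl]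
    have h3 : (0:ℝ) < poch 1 k := poch_pos one_pos k
    have h4 : (0:ℝ) < k.factorial := by exact_mod_cast k.factorial_pos
    rw [factorial_poch, pow_add l, div_pow, pow_add l n k, pow_succ]
    field_simp
    ring
  have hnorm : ∀ k, (∫ x in Ioi (0:ℝ), ‖g k x‖) = ∫ x in Ioi (0:ℝ), g k x := by
    intro k
    refine setIntegral_congr_fun measurableSet_Ioi (fun x hx => ?_)
    have hx0 : (0:ℝ) < x := hx
    have h1 := poch_pos hm k
    have h3 : (0:ℝ) < poch 1 k := poch_pos one_pos k
    have h4 : (0:ℝ) < k.factorial := by exact_mod_cast k.factorial_pos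
    rw [Real.norm_of_nonneg]
    rw [hg]
    positivity
  have hsum2 : Summable (fun k : ℕ =>
      poch m k * poch ((n:ℝ)+1) k / (poch 1 k * (k.factorial : ℝ)) * (c / l) ^ k) :=
    summable_main hm (by positivity) (by positivity) hz
  have hsum : Summable (fun k => ∫ x in Ioi (0:ℝ), ‖g k x‖) := by
    refine ((hsum2.mul_left ((n.factorial : ℝ) / l ^ (n+1))).congr (fun k => ?_))
    rw [hnorm, hval]
  have hpt : ∀ x ∈ Ioi (0:ℝ),
      x ^ n * Real.exp (-(l * x)) * hyp1F1 m 1 (c * x) = ∑' k, g k x := by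
    intro x hx
    rw [hyp1F1, ← tsum_mul_left]
    refine tsum_congr (fun k => ?_)
    rw [hg]
    simp only []
    rw [mul_pow, pow_add]
    ring
  rw [setIntegral_congr_fun measurableSet_Ioi hpt,
    ← MeasureTheory.integral_tsum_of_summable_integral_norm hint hsum]
  rw [tsum_congr hval, tsum_mul_left]
  rfl

/-- Generalized MGF of the Rician Shadowed distribution. -/
theorem stmt_10 (m Kr γbar : ℝ) (n : ℕ) (s : ℝ)
    (hm : 0 < m) (hK : 0 ≤ Kr) (hγ : 0 < γbar) (hs : s ≤ 0) :
    (∫ x in Ioi (0:ℝ),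
        x ^ n * Real.exp (s * x) *
          ((m / (m + Kr)) ^ m * ((1 + Kr) / γbar) * Real.exp (-(1 + Kr) * x / γbar) *
            hyp1F1 m 1 (Kr * (1 + Kr) * x / (γbar * (m + Kr)))))
      = (m / (m + Kr)) ^ m * (1 + Kr) * Real.Gamma ((n : ℝ) + 1) * γbar ^ n /
          (1 + Kr - γbar * s) ^ (n + 1) *
          hyp2F1 m ((n : ℝ) + 1) 1
            ((1 + Kr) * Kr / ((m + Kr) * (1 + Kr - γbar * s))) := by
  have hmK : 0 < m + Kr := by linarith
  have h1K : (0:ℝ) < 1 + Kr := by linarith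
  set l : ℝ := (1 + Kr) / γbar - s with hl_def
  set c : ℝ := Kr * (1 + Kr) / (γbar * (m + Kr)) with hc_def
  have hdiv : 0 < (1 + Kr) / γbar := div_pos h1K hγ
  have hl : 0 < l := by rw [hl_def]; linarith
  have hc : 0 ≤ c := by rw [hc_def]; positivity
  have hcl : c < l := by
    have hfrac : Kr / (m + Kr) < 1 := (div_lt_one hmK).mpr (by linarith)
    have hceq : c = (1 + Kr) / γbar * (Kr / (m + Kr)) := by
      rw [hc_def, div_mul_div_comm]; ring
    calc c = (1 + Kr) / γbar * (Kr / (m + Kr)) := hceq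
      _ < (1 + Kr) / γbar * 1 := by
          exact mul_lt_mul_of_pos_left hfrac hdiv
      _ = (1 + Kr) / γbar := mul_one _
      _ ≤ l := by rw [hl_def]; linarith
  have hz : c / l < 1 := (div_lt_one hl).mpr hcl
  have hden : 1 + Kr - γbar * s = γbar * l := by
    rw [hl_def]; field_simp
  have hdenpos : 0 < 1 + Kr - γbar * s := by rw [hden]; positivity
  set C : ℝ := (m / (m + Kr)) ^ m * ((1 + Kr) / γbar) with hC
  have hpt : ∀ x ∈ Ioi (0:ℝ),
      x ^ n * Real.exp (s * x) *
          ((m / (m + Kr)) ^ m * ((1 + Kr) / γbar) * Real.exp (-(1 + Kr) * x / γbar) *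
            hyp1F1 m 1 (Kr * (1 + Kr) * x / (γbar * (m + Kr))))
        = C * (x ^ n * Real.exp (-(l * x)) * hyp1F1 m 1 (c * x)) := by
    intro x _
    have harg : Kr * (1 + Kr) * x / (γbar * (m + Kr)) = c * x := by rw [hc_def]; ring
    have hexp : Real.exp (s * x) * Real.exp (-(1 + Kr) * x / γbar) = Real.exp (-(l * x)) := by
      rw [← Real.exp_add]
      congr 1
      rw [hl_def]; ring
    rw [harg, ← hexp, hC]
    ring
  rw [setIntegral_congr_fun measurableSet_Ioi hpt, MeasureTheory.integral_const_mul,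
    key n hm hl hc hz]
  have hzz : c / l = (1 + Kr) * Kr / ((m + Kr) * (1 + Kr - γbar * s)) := by
    rw [hden, hc_def]
    field_simp
  rw [hzz, hC, Real.Gamma_nat_eq_factorial, hden, mul_pow]
  have hγn : γbar ^ (n+1) ≠ 0 := by positivity
  have hln : l ^ (n+1) ≠ 0 := by positivity
  field_simp
  ring
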